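/- Fix t ∈ [0,1), μ ∈ ℝ, σ > 0, and let X₀ ∼ N(0,1) and X₁ ∼ N(μ, σ²) be independent real random variables. Set X = (1−t) X₀ + t X₁, w(t) = (t σ² + t − 1)/((1−t)² + t² σ²), and let v(x) = w(t) x + (1−t)μ/((1−t)² + t² σ²) be the exact flow-matching field between N(0,1) and N(μ, σ²) at time t. Then the CFM gradient-update fluctuation X₁ − (X − t X₁)/(1−t) − v(X) has variance Var(X₁ − (X − t X₁)/(1−t) − v(X)) = (1 + w(t)(1−t))² · Var(X₀) + (1 − t·w(t))² · Var(X₁) = (1 + w(t)(1−t))² + (1 − t·w(t))² σ². -/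

import Mathlib

open MeasureTheory ProbabilityTheory

open Real Filter Asymptotics

section Aux

lemma cfm_tendsto_aux : Filter.Tendsto (fun x : ℝ => x * rexp (-(1/2) * x ^ 2)) atTop (nhds 0) := by
  have h := rpow_mul_exp_neg_mul_sq_isLittleO_exp_neg (b := 1/2) one_half_pos 1
  have h2 : (fun x : ℝ => x * rexp (-(1/2) * x ^ 2)) =o[atTop] fun x : ℝ => rexp (-(1/2) * x) := by
    refine h.congr' ?_ (EventuallyEq.refl _ _)
    filter_upwards [eventually_ge_atTop (0:ℝ)] with x hx
    rw [Real.rpow_one]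
  have h3 : Filter.Tendsto (fun x : ℝ => rexp (-(1/2) * x)) atTop (nhds 0) := by
    apply Real.tendsto_exp_atBot.comp
    exact (tendsto_const_mul_atBot_of_neg (by norm_num)).mpr tendsto_id
  exact h2.isBigO.trans_tendsto h3

lemma cfm_sq_tendsto_atBot : Filter.Tendsto (fun x : ℝ => -(1/2) * x ^ 2) atBot atBot := by
  apply (tendsto_const_mul_atBot_of_neg (by norm_num : (-(1/2):ℝ) < 0)).mpr
  have : Filter.Tendsto (fun x : ℝ => x ^ 2) atBot atTop := by
    have := (tendsto_pow_atTop (two_ne_zero)).comp (tendsto_neg_atBot_atTop (G := ℝ))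
    simpa [Function.comp_def, neg_sq] using this
  exact this

lemma cfm_sq_tendsto_atTop : Filter.Tendsto (fun x : ℝ => -(1/2) * x ^ 2) atTop atBot := by
  apply (tendsto_const_mul_atBot_of_neg (by norm_num : (-(1/2):ℝ) < 0)).mpr
  exact tendsto_pow_atTop two_ne_zero

lemma cfm_integral_x_exp : ∫ x : ℝ, x * rexp (-(1/2) * x ^ 2) = 0 := by
  have hderiv : ∀ x : ℝ, HasDerivAt (fun y : ℝ => -rexp (-(1/2) * y ^ 2))
      (x * rexp (-(1/2) * x ^ 2)) x := by
    intro x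
    have h1 : HasDerivAt (fun y : ℝ => -(1/2) * y ^ 2) (-(1/2) * (2 * x)) x := by
      simpa using (hasDerivAt_pow 2 x).const_mul (-(1/2) : ℝ)
    have h2 := (h1.exp).neg
    refine h2.congr_deriv ?_
    ring
  have hint : Integrable (fun x : ℝ => x * rexp (-(1/2) * x ^ 2)) := by
    exact integrable_mul_exp_neg_mul_sq (b := 1/2) one_half_pos
  have hbot : Filter.Tendsto (fun y : ℝ => -rexp (-(1/2) * y ^ 2)) atBot (nhds 0) := by
    simpa using (Real.tendsto_exp_atBot.comp cfm_sq_tendsto_atBot).neg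
  have htop : Filter.Tendsto (fun y : ℝ => -rexp (-(1/2) * y ^ 2)) atTop (nhds 0) := by
    simpa using (Real.tendsto_exp_atBot.comp cfm_sq_tendsto_atTop).neg
  rw [MeasureTheory.integral_of_hasDerivAt_of_tendsto hderiv hint hbot htop]
  simp

lemma cfm_integrable_sq_exp : Integrable (fun x : ℝ => x ^ 2 * rexp (-(1/2) * x ^ 2)) := by
  have := integrable_rpow_mul_exp_neg_mul_sq (b := 1/2) one_half_pos (s := 2) (by norm_num)
  simpa [Real.rpow_two, neg_mul] using this

lemma cfm_integral_sq_exp : ∫ x : ℝ, x ^ 2 * rexp (-(1/2) * x ^ 2) = Real.sqrt (2 * Real.pi) := by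
  have hderiv : ∀ x : ℝ, HasDerivAt (fun y : ℝ => -(y * rexp (-(1/2) * y ^ 2)))
      (x ^ 2 * rexp (-(1/2) * x ^ 2) - rexp (-(1/2) * x ^ 2)) x := by
    intro x
    have h1 : HasDerivAt (fun y : ℝ => -(1/2) * y ^ 2) (-(1/2) * (2 * x)) x := by
      simpa using (hasDerivAt_pow 2 x).const_mul (-(1/2) : ℝ)
    have h2 : HasDerivAt (fun y : ℝ => y * rexp (-(1/2) * y ^ 2))
        (1 * rexp (-(1/2) * x ^ 2) + x * (rexp (-(1/2) * x ^ 2) * (-(1/2) * (2 * x)))) x :=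
      (hasDerivAt_id x).mul h1.exp
    have h3 := h2.neg
    refine h3.congr_deriv ?_
    ring
  have hint : Integrable (fun x : ℝ => x ^ 2 * rexp (-(1/2) * x ^ 2) - rexp (-(1/2) * x ^ 2)) := by
    apply cfm_integrable_sq_exp.sub
    exact integrable_exp_neg_mul_sq (b := 1/2) one_half_pos
  have hbot : Filter.Tendsto (fun y : ℝ => -(y * rexp (-(1/2) * y ^ 2))) atBot (nhds 0) := by
    have : Filter.Tendsto (fun y : ℝ => -(y * rexp (-(1/2) * y ^ 2)))
        atBot (nhds 0) := by
      have hcomp := cfm_tendsto_aux.comp (tendsto_neg_atBot_atTop (G := ℝ))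
      simpa [Function.comp_def, neg_sq, neg_mul] using hcomp
    exact this
  have htop : Filter.Tendsto (fun y : ℝ => -(y * rexp (-(1/2) * y ^ 2))) atTop (nhds 0) := by
    simpa using cfm_tendsto_aux.neg
  have h0 := MeasureTheory.integral_of_hasDerivAt_of_tendsto hderiv hint hbot htop
  rw [sub_zero] at h0
  have hsub := MeasureTheory.integral_sub cfm_integrable_sq_exp
    (integrable_exp_neg_mul_sq (b := 1/2) one_half_pos)
  rw [hsub, sub_eq_zero] at h0
  have hg : ∫ x : ℝ, rexp (-(1/2) * x ^ 2) = Real.sqrt (2 * Real.pi) := by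
    have h := integral_gaussian (1/2)
    rw [h]
    rw [show Real.pi / (1/2) = 2 * Real.pi by ring]
  rw [h0, hg]

end Aux

lemma cfm_pdf01 (x : ℝ) :
    gaussianPDFReal 0 1 x = (Real.sqrt (2 * Real.pi))⁻¹ * rexp (-(1/2) * x ^ 2) := by
  simp only [gaussianPDFReal, NNReal.coe_one, mul_one, sub_zero]
  ring_nf

lemma cfm_g01_eq : gaussianReal 0 1 =
    volume.withDensity (fun x => ((gaussianPDFReal 0 1 x).toNNReal : ENNReal)) := by
  rw [gaussianReal_of_var_ne_zero 0 one_ne_zero]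
  rfl

lemma cfm_integral_g01 (g : ℝ → ℝ) :
    ∫ x, g x ∂(gaussianReal 0 1) = ∫ x, gaussianPDFReal 0 1 x * g x := by
  rw [cfm_g01_eq, integral_withDensity_eq_integral_smul
    (measurable_gaussianPDFReal 0 1).real_toNNReal g]
  congr 1
  ext x
  simp [NNReal.smul_def, Real.coe_toNNReal _ (gaussianPDFReal_nonneg 0 1 x)]

lemma cfm_integrable_g01 (g : ℝ → ℝ) :
    Integrable g (gaussianReal 0 1) ↔ Integrable (fun x => gaussianPDFReal 0 1 x * g x) := by
  rw [cfm_g01_eq, integrable_withDensity_iff_integrable_smul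
    (measurable_gaussianPDFReal 0 1).real_toNNReal]
  constructor <;> intro h <;> refine h.congr (Filter.Eventually.of_forall fun x => ?_) <;>
    simp [NNReal.smul_def, Real.coe_toNNReal _ (gaussianPDFReal_nonneg 0 1 x)]

lemma cfm_integral_id_g01 : ∫ x, x ∂(gaussianReal 0 1) = 0 := by
  rw [cfm_integral_g01]
  have : ∀ x : ℝ, gaussianPDFReal 0 1 x * x =
      (Real.sqrt (2 * Real.pi))⁻¹ * (x * rexp (-(1/2) * x ^ 2)) := by
    intro x; rw [cfm_pdf01]; ring
  simp_rw [this]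
  rw [integral_const_mul, cfm_integral_x_exp, mul_zero]

lemma cfm_integral_sq_g01 : ∫ x, x ^ 2 ∂(gaussianReal 0 1) = 1 := by
  rw [cfm_integral_g01]
  have : ∀ x : ℝ, gaussianPDFReal 0 1 x * x ^ 2 =
      (Real.sqrt (2 * Real.pi))⁻¹ * (x ^ 2 * rexp (-(1/2) * x ^ 2)) := by
    intro x; rw [cfm_pdf01]; ring
  simp_rw [this]
  rw [integral_const_mul, cfm_integral_sq_exp]
  rw [inv_mul_cancel₀]
  positivity

lemma cfm_memLp_id_g01 : MemLp id 2 (gaussianReal 0 1) := by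
  rw [memLp_two_iff_integrable_sq aestronglyMeasurable_id]
  rw [show (fun x : ℝ => id x ^ 2) = fun x : ℝ => x ^ 2 from rfl, cfm_integrable_g01]
  have : ∀ x : ℝ, gaussianPDFReal 0 1 x * x ^ 2 =
      (Real.sqrt (2 * Real.pi))⁻¹ * (x ^ 2 * rexp (-(1/2) * x ^ 2)) := by
    intro x; rw [cfm_pdf01]; ring
  simp_rw [this]
  exact cfm_integrable_sq_exp.const_mul _

lemma cfm_variance_id_g01 : variance id (gaussianReal 0 1) = 1 := by
  rw [variance_eq_sub cfm_memLp_id_g01]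
  have h1 : (gaussianReal 0 1)[id ^ 2] = 1 := by
    rw [show (id ^ 2 : ℝ → ℝ) = fun x : ℝ => x ^ 2 by ext x; simp]
    exact cfm_integral_sq_g01
  have h2 : (gaussianReal 0 1)[id] = 0 := cfm_integral_id_g01
  rw [h1, h2]
  norm_num

lemma cfm_evariance_map {α : Type*} [MeasurableSpace α] {μ : Measure α} {X : α → ℝ}
    (hX : AEMeasurable X μ) :
    evariance id (Measure.map X μ) = evariance X μ := by
  have h1 : ∫ y, id y ∂(Measure.map X μ) = μ[X] := integral_map hX aestronglyMeasurable_id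
  rw [evariance, evariance, h1]
  rw [lintegral_map' ?_ hX]
  · rfl
  · apply Measurable.aemeasurable
    measurability

lemma cfm_variance_map {α : Type*} [MeasurableSpace α] {μ : Measure α} {X : α → ℝ}
    (hX : AEMeasurable X μ) :
    variance id (Measure.map X μ) = variance X μ := by
  rw [variance, variance, cfm_evariance_map hX]

lemma cfm_variance_add_const {α : Type*} [MeasurableSpace α] {μ : Measure α}
    [IsProbabilityMeasure μ] {X : α → ℝ} (hX : Integrable X μ) (c : ℝ) :
    variance (fun ω => X ω + c) μ = variance X μ := by
  rw [variance, variance, evariance, evariance]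
  have h : ∫ a, (X a + c) ∂μ = (∫ a, X a ∂μ) + c := by
    rw [integral_add hX (integrable_const c), integral_const]
    simp
  rw [h]
  simp_rw [add_sub_add_right_eq_sub]

lemma cfm_g_rep (m s : ℝ) :
    gaussianReal m (⟨s ^ 2, sq_nonneg s⟩ : NNReal) =
      Measure.map (fun x => s * x + m) (gaussianReal 0 1) := by
  have h1 : (gaussianReal 0 1).map (s * ·) = gaussianReal 0 (⟨s ^ 2, sq_nonneg s⟩ : NNReal) := by
    rw [gaussianReal_map_const_mul (μ := 0) (v := 1) s]
    congr 1
    · simp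
    · exact mul_one _
  have h2 := gaussianReal_map_add_const (μ := (0:ℝ)) (v := (⟨s ^ 2, sq_nonneg s⟩ : NNReal)) m
  rw [← h1, Measure.map_map (measurable_add_const m) (measurable_const_mul s)] at h2
  simpa [Function.comp_def] using h2.symm

lemma cfm_memLp_id_g (m s : ℝ) :
    MemLp id 2 (gaussianReal m (⟨s ^ 2, sq_nonneg s⟩ : NNReal)) := by
  rw [cfm_g_rep m s]
  rw [memLp_map_measure_iff aestronglyMeasurable_id
    ((measurable_const_mul s).add_const m).aemeasurable]
  exact (cfm_memLp_id_g01.const_mul s).add (memLp_const m)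

lemma cfm_variance_id_g (m s : ℝ) :
    variance id (gaussianReal m (⟨s ^ 2, sq_nonneg s⟩ : NNReal)) = s ^ 2 := by
  have hint : Integrable (fun x : ℝ => s * x) (gaussianReal 0 1) := by
    simpa using ((cfm_memLp_id_g01.integrable one_le_two).const_mul s)
  rw [cfm_g_rep m s,
    cfm_variance_map ((measurable_const_mul s).add_const m).aemeasurable,
    cfm_variance_add_const hint m]
  have h := variance_const_mul s (id : ℝ → ℝ) (gaussianReal 0 1)
  simp only [id_eq] at h
  rw [h, cfm_variance_id_g01, mul_one]

lemma cfm_variance_two {Ω : Type*} [MeasureSpace Ω] [IsProbabilityMeasure (ℙ : Measure Ω)]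
    (a b c : ℝ) {Y Z : Ω → ℝ}
    (hY : MemLp Y 2 ℙ) (hZ : MemLp Z 2 ℙ) (hind : IndepFun Y Z ℙ) :
    variance (fun ω => a * Y ω + (b * Z ω + c)) ℙ =
      a ^ 2 * variance Y ℙ + b ^ 2 * variance Z ℙ := by
  have h1 : IndepFun (fun ω => a * Y ω) (fun ω => b * Z ω + c) ℙ :=
    hind.comp (measurable_const_mul a) ((measurable_const_mul b).add_const c)
  have hY2 : MemLp (fun ω => a * Y ω) 2 ℙ := hY.const_mul a
  have hZ2 : MemLp (fun ω => b * Z ω + c) 2 ℙ := (hZ.const_mul b).add (memLp_const c)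
  show variance ((fun ω => a * Y ω) + fun ω => b * Z ω + c) ℙ = _
  rw [IndepFun.variance_add hY2 hZ2 h1, variance_const_mul,
    cfm_variance_add_const ((hZ.integrable one_le_two).const_mul b) c, variance_const_mul]


/-- Analytical dispersion of the CFM gradient-update fluctuation at time `t` when
matching `N(0,1)` to `N(μ,σ²)` with the linear conditional flow and the exact
flow-matching field `v`: the variance decomposes into the two displayed terms. -/
theorem cfm_update_variance_gaussian_pair {Ω : Type*} [MeasureSpace Ω]
    [IsProbabilityMeasure (ℙ : Measure Ω)]
    (t μ σ : ℝ) (ht : t ∈ Set.Ico (0 : ℝ) 1) (hσ : 0 < σ)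
    (X₀ X₁ : Ω → ℝ) (hX₀ : Measurable X₀) (hX₁ : Measurable X₁)
    (hlaw₀ : Measure.map X₀ ℙ = gaussianReal 0 1)
    (hlaw₁ : Measure.map X₁ ℙ = gaussianReal μ (⟨σ ^ 2, sq_nonneg σ⟩ : NNReal))
    (hindep : IndepFun X₀ X₁ ℙ)
    (w : ℝ) (hw : w = (t * σ ^ 2 + t - 1) / ((1 - t) ^ 2 + t ^ 2 * σ ^ 2))
    (v : ℝ → ℝ)
    (hv : ∀ y, v y = w * y + (1 - t) * μ / ((1 - t) ^ 2 + t ^ 2 * σ ^ 2))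
    (X : Ω → ℝ) (hX : ∀ ω, X ω = (1 - t) * X₀ ω + t * X₁ ω) :
    variance (fun ω => X₁ ω - (X ω - t * X₁ ω) / (1 - t) - v (X ω)) ℙ =
      (1 + w * (1 - t)) ^ 2 * variance X₀ ℙ +
        (1 - t * w) ^ 2 * variance X₁ ℙ ∧
    variance (fun ω => X₁ ω - (X ω - t * X₁ ω) / (1 - t) - v (X ω)) ℙ =
      (1 + w * (1 - t)) ^ 2 + (1 - t * w) ^ 2 * σ ^ 2 := by
  have h1t : (1 : ℝ) - t ≠ 0 := sub_ne_zero.mpr (ne_of_gt ht.2)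
  have hfun : (fun ω => X₁ ω - (X ω - t * X₁ ω) / (1 - t) - v (X ω)) =
      fun ω => (-(1 + w * (1 - t))) * X₀ ω +
        ((1 - t * w) * X₁ ω + (-((1 - t) * μ / ((1 - t) ^ 2 + t ^ 2 * σ ^ 2)))) := by
    funext ω
    rw [hX ω, hv]
    field_simp
    ring
  have hmem₀ : MemLp X₀ 2 ℙ := by
    refine (memLp_map_measure_iff aestronglyMeasurable_id hX₀.aemeasurable).1 ?_
    rw [hlaw₀]
    exact cfm_memLp_id_g01
  have hmem₁ : MemLp X₁ 2 ℙ := by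
    refine (memLp_map_measure_iff aestronglyMeasurable_id hX₁.aemeasurable).1 ?_
    rw [hlaw₁]
    exact cfm_memLp_id_g μ σ
  have hvar₀ : variance X₀ ℙ = 1 := by
    rw [← cfm_variance_map hX₀.aemeasurable, hlaw₀, cfm_variance_id_g01]
  have hvar₁ : variance X₁ ℙ = σ ^ 2 := by
    rw [← cfm_variance_map hX₁.aemeasurable, hlaw₁, cfm_variance_id_g μ σ]
  have hmain : variance (fun ω => X₁ ω - (X ω - t * X₁ ω) / (1 - t) - v (X ω)) ℙ =
      (1 + w * (1 - t)) ^ 2 * variance X₀ ℙ + (1 - t * w) ^ 2 * variance X₁ ℙ := by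
    rw [hfun, cfm_variance_two _ _ _ hmem₀ hmem₁ hindep, neg_pow]
    ring
  refine ⟨hmain, ?_⟩
  rw [hmain, hvar₀, hvar₁, mul_one]
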